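/- Let (u_n)_{n≥1} be inf-harmonic functions on a plane domain D converging pointwise to a function u : D → [0,∞]. Then either u ≡ ∞ on D, or u is finite everywhere and inf-harmonic on D. -/

import Mathlib

open Complex Metric Set Filter
open scoped ENNReal

/-- A real-valued function is harmonic on `D` if near each point of `D`
it is the real part of a holomorphic function. -/
def HarmonicOnSet (f : ℂ → ℝ) (D : Set ℂ) : Prop :=
  ∀ z ∈ D, ∃ ε > 0, Metric.ball z ε ⊆ D ∧
    ∃ F : ℂ → ℂ, DifferentiableOn ℂ F (Metric.ball z ε) ∧
      ∀ w ∈ Metric.ball z ε, f w = (F w).re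

/-- `u` is inf-harmonic on `D`: the pointwise infimum of a nonempty family of
nonnegative harmonic functions on `D`. -/
def InfHarmonicOn (u : ℂ → ℝ) (D : Set ℂ) : Prop :=
  ∃ H : Set (ℂ → ℝ), H.Nonempty ∧
    (∀ h ∈ H, HarmonicOnSet h D) ∧
    (∀ h ∈ H, ∀ z ∈ D, 0 ≤ h z) ∧
    (∀ z ∈ D, u z = sInf ((fun h => h z) '' H))

open scoped Topology NNReal

/-- Core Schwarz-type lemma for maps into the left half-plane. -/
lemma schwarz_halfplane {F : ℂ → ℂ} {c : ℂ} {R : ℝ}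
    (hF : DifferentiableOn ℂ F (ball c R))
    (hre : ∀ z ∈ ball c R, (F z).re < 0) {z : ℂ} (hz : z ∈ ball c R) :
    norm (F z - F c) ≤ (dist z c / R) * norm (F z + (starRingEnd ℂ) (F c)) := by
  have hR : 0 < R := pos_of_mem_ball hz
  have hc : c ∈ ball c R := mem_ball_self hR
  set a : ℂ := F c with ha
  have hden : ∀ w ∈ ball c R, F w + (starRingEnd ℂ) a ≠ 0 := by
    intro w hw hzero
    have : (F w + (starRingEnd ℂ) a).re = (F w).re + a.re := by simp
    rw [hzero] at this
    have h1 := hre w hw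
    have h2 := hre c hc
    simp only [Complex.zero_re] at this
    linarith
  set φ : ℂ → ℂ := fun w => (F w - a) / (F w + (starRingEnd ℂ) a) with hφ
  have hφd : DifferentiableOn ℂ φ (ball c R) :=
    DifferentiableOn.div (hF.sub (differentiableOn_const _))
      (hF.add (differentiableOn_const _)) hden
  have hmaps : MapsTo φ (ball c R) (ball (φ c) 1) := by
    have hφc : φ c = 0 := by simp [hφ, ha]
    intro w hw
    rw [hφc, mem_ball, dist_zero_right]
    have hne := hden w hw
    rw [hφ]
    simp only
    rw [norm_div]
    rw [div_lt_one (norm_pos_iff.mpr hne)]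
    have : Complex.normSq (F w - a) < Complex.normSq (F w + (starRingEnd ℂ) a) := by
      have e1 : Complex.normSq (F w - a) = ((F w).re - a.re)^2 + ((F w).im - a.im)^2 := by
        simp [Complex.normSq_apply]; ring
      have e2 : Complex.normSq (F w + (starRingEnd ℂ) a)
          = ((F w).re + a.re)^2 + ((F w).im - a.im)^2 := by
        simp [Complex.normSq_apply]; ring
      have h1 := hre w hw
      have h2 := hre c hc
      rw [e1, e2]
      have h2' : a.re < 0 := by rw [ha]; exact h2
      nlinarith [mul_pos (neg_pos.2 h1) (neg_pos.2 h2')]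
    have h1 : norm (F w - a) = Real.sqrt (Complex.normSq (F w - a)) := by
      rw [Complex.norm_def]
    have h2 : norm (F w + (starRingEnd ℂ) a) =
        Real.sqrt (Complex.normSq (F w + (starRingEnd ℂ) a)) := by
      rw [Complex.norm_def]
    rw [h1, h2]
    exact Real.sqrt_lt_sqrt (Complex.normSq_nonneg _) this
  have := Complex.dist_le_div_mul_dist_of_mapsTo_ball hφd (hmaps.mono_right ball_subset_closedBall) hz
  have hφc : φ c = 0 := by simp [hφ, ha]
  rw [hφc, dist_zero_right] at this
  have hval : ‖φ z‖ = norm (F z - a) / norm (F z + (starRingEnd ℂ) a) := by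
    simp [hφ, map_div₀]
  rw [hval] at this
  rcases eq_or_ne (F z + (starRingEnd ℂ) a) 0 with h0 | h0
  · exact absurd h0 (hden z hz)
  · have habs : 0 < norm (F z + (starRingEnd ℂ) a) := by
      simpa [norm_pos_iff] using h0
    calc norm (F z - a)
        = norm (F z - a) / norm (F z + (starRingEnd ℂ) a)
          * norm (F z + (starRingEnd ℂ) a) := by field_simp
      _ ≤ (1 / R * dist z c) * norm (F z + (starRingEnd ℂ) a) := by
          apply mul_le_mul_of_nonneg_right this habs.le
      _ = (dist z c / R) * norm (F z + (starRingEnd ℂ) a) := by ring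

/-- Schwarz-type bound for holomorphic functions with real part bounded above by `A`. -/
lemma schwarz_bound {F : ℂ → ℂ} {c : ℂ} {R A : ℝ}
    (hF : DifferentiableOn ℂ F (ball c R))
    (hre : ∀ z ∈ ball c R, (F z).re ≤ A) {z : ℂ} (hz : z ∈ ball c R) :
    norm (F z - F c)
      ≤ (dist z c / R) * norm (F z + (starRingEnd ℂ) (F c) - 2 * A) := by
  have key : ∀ δ : ℝ, 0 < δ → norm (F z - F c)
      ≤ (dist z c / R) * norm (F z + (starRingEnd ℂ) (F c) - 2 * A - 2 * δ) := by
    intro δ hδ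
    have h := schwarz_halfplane (F := fun w => F w - (A + δ))
      (hF.sub (differentiableOn_const _))
      (fun w hw => by
        have := hre w hw
        simp only [Complex.sub_re, Complex.add_re, Complex.ofReal_re]
        linarith) hz
    have e1 : F z - (↑A + ↑δ) - (F c - (↑A + ↑δ)) = F z - F c := by ring
    have e2 : F z - (↑A + ↑δ) + (starRingEnd ℂ) (F c - (↑A + ↑δ))
        = F z + (starRingEnd ℂ) (F c) - 2 * A - 2 * δ := by
      simp only [map_sub, map_add, Complex.conj_ofReal]
      ring
    rw [e1, e2] at h
    exact h
  have tend : Tendsto (fun δ : ℝ =>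
      (dist z c / R) * norm (F z + (starRingEnd ℂ) (F c) - 2 * A - 2 * δ))
      (nhdsWithin 0 (Set.Ioi 0)) (nhds
      ((dist z c / R) * norm (F z + (starRingEnd ℂ) (F c) - 2 * A))) := by
    have hcont : Continuous (fun δ : ℝ =>
        (dist z c / R) * norm (F z + (starRingEnd ℂ) (F c) - 2 * A - 2 * δ)) := by
      apply Continuous.mul continuous_const
      apply continuous_norm.comp
      fun_prop
    have := hcont.tendsto 0
    simp only [Complex.ofReal_zero, mul_zero, sub_zero] at this
    exact this.mono_left nhdsWithin_le_nhds
  exact ge_of_tendsto tend (eventually_nhdsWithin_of_forall (fun δ hδ => key δ hδ))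

/-- Harnack inequality on the half-ball. -/
lemma harnack_pt {F : ℂ → ℂ} {c : ℂ} {R : ℝ}
    (hF : DifferentiableOn ℂ F (ball c R))
    (hre : ∀ z ∈ ball c R, 0 ≤ (F z).re) {z : ℂ} (hz : z ∈ ball c R)
    (hdist : dist z c ≤ R / 2) :
    (F z).re ≤ 3 * (F c).re ∧ (F c).re ≤ 3 * (F z).re := by
  have hR : 0 < R := pos_of_mem_ball hz
  have h := schwarz_bound (F := fun w => -F w) (A := 0) hF.neg
    (fun w hw => by simp only [Complex.neg_re]; linarith [hre w hw]) hz
  simp only [Complex.ofReal_zero, mul_zero, sub_zero] at h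
  have e1 : -F z - -F c = -(F z - F c) := by ring
  have e2 : -F z + (starRingEnd ℂ) (-F c) = -(F z + (starRingEnd ℂ) (F c)) := by
    rw [map_neg]; ring
  rw [e1, e2, norm_neg, norm_neg] at h
  set t : ℝ := dist z c / R with ht
  have ht0 : 0 ≤ t := by positivity
  have ht12 : t ≤ 1 / 2 := by
    rw [ht, div_le_div_iff₀ hR (by norm_num)]
    linarith
  have hsq := mul_self_le_mul_self (norm_nonneg _) h
  have hA : norm (F z - F c) * norm (F z - F c)
      = Complex.normSq (F z - F c) := by
    rw [← Complex.sq_norm]; ring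
  have hB : (t * norm (F z + (starRingEnd ℂ) (F c))) *
      (t * norm (F z + (starRingEnd ℂ) (F c)))
      = t^2 * Complex.normSq (F z + (starRingEnd ℂ) (F c)) := by
    rw [← Complex.sq_norm]; ring
  rw [hA, hB] at hsq
  have hnsq1 : Complex.normSq (F z - F c)
      = ((F z).re - (F c).re)^2 + ((F z).im - (F c).im)^2 := by
    simp [Complex.normSq_apply]; ring
  have hnsq2 : Complex.normSq (F z + (starRingEnd ℂ) (F c))
      = ((F z).re + (F c).re)^2 + ((F z).im - (F c).im)^2 := by
    simp [Complex.normSq_apply]; ring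
  rw [hnsq1, hnsq2] at hsq
  have hx : 0 ≤ (F z).re := hre z hz
  have hA0 : 0 ≤ (F c).re := hre c (mem_ball_self hR)
  set x := (F z).re
  set A := (F c).re
  set s := ((F z).im - (F c).im)^2 with hs
  have hs0 : 0 ≤ s := sq_nonneg _
  have hts : t^2 ≤ (1/2)^2 := by nlinarith
  have key : (x - A)^2 ≤ (1/4) * (x + A)^2 := by nlinarith
  constructor
  · nlinarith [sq_nonneg (x - 3*A), sq_nonneg (x + A)]
  · nlinarith [sq_nonneg (A - 3*x), sq_nonneg (x + A)]

/-- Size bound: a holomorphic function with nonnegative real part satisfies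
`|F z| ≤ 3 |F c|` on the half-ball. -/
lemma size_pt {F : ℂ → ℂ} {c : ℂ} {R : ℝ}
    (hF : DifferentiableOn ℂ F (ball c R))
    (hre : ∀ z ∈ ball c R, 0 ≤ (F z).re) {z : ℂ} (hz : z ∈ ball c R)
    (hdist : dist z c ≤ R / 2) :
    norm (F z) ≤ 3 * norm (F c) := by
  have hR : 0 < R := pos_of_mem_ball hz
  have h := schwarz_bound (F := fun w => -F w) (A := 0) hF.neg
    (fun w hw => by simp only [Complex.neg_re]; linarith [hre w hw]) hz
  simp only [Complex.ofReal_zero, mul_zero, sub_zero] at h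
  have e1 : -F z - -F c = -(F z - F c) := by ring
  have e2 : -F z + (starRingEnd ℂ) (-F c) = -(F z + (starRingEnd ℂ) (F c)) := by
    rw [map_neg]; ring
  rw [e1, e2, norm_neg, norm_neg] at h
  set t : ℝ := dist z c / R with ht
  have ht0 : 0 ≤ t := by positivity
  have ht12 : t ≤ 1 / 2 := by
    rw [ht, div_le_div_iff₀ hR (by norm_num)]
    linarith
  have tri1 : norm (F z) ≤ norm (F c) + norm (F z - F c) := by
    calc norm (F z) = norm (F c + (F z - F c)) := by ring_nf
      _ ≤ norm (F c) + norm (F z - F c) := norm_add_le _ _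
  have tri2 : norm (F z + (starRingEnd ℂ) (F c))
      ≤ norm (F z) + norm (F c) := by
    calc norm (F z + (starRingEnd ℂ) (F c))
        ≤ norm (F z) + norm ((starRingEnd ℂ) (F c)) := norm_add_le _ _
      _ = norm (F z) + norm (F c) := by rw [Complex.norm_conj]
  have habs0 : 0 ≤ norm (F z) + norm (F c) := by positivity
  have hh : norm (F z - F c) ≤ (1/2) * (norm (F z) + norm (F c)) := by
    calc norm (F z - F c) ≤ t * norm (F z + (starRingEnd ℂ) (F c)) := h
      _ ≤ (1/2) * (norm (F z) + norm (F c)) := by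
          apply mul_le_mul ht12 tri2 (norm_nonneg _) (by norm_num)
  linarith

/-- Borel–Carathéodory-type bound. -/
lemma bc_pt {F : ℂ → ℂ} {c : ℂ} {R M : ℝ}
    (hF : DifferentiableOn ℂ F (ball c R))
    (hre : ∀ z ∈ ball c R, |(F z).re| ≤ M) {z : ℂ} (hz : z ∈ ball c R)
    (hdist : dist z c ≤ R / 2) :
    norm (F z) ≤ 3 * norm (F c) + 2 * M := by
  have hR : 0 < R := pos_of_mem_ball hz
  have h := schwarz_bound (F := F) (A := M) hF
    (fun w hw => (abs_le.1 (hre w hw)).2) hz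
  set t : ℝ := dist z c / R with ht
  have ht0 : 0 ≤ t := by positivity
  have ht12 : t ≤ 1 / 2 := by
    rw [ht, div_le_div_iff₀ hR (by norm_num)]
    linarith
  have hM0 : 0 ≤ M := le_trans (abs_nonneg _) (hre c (mem_ball_self hR))
  have tri1 : norm (F z) ≤ norm (F c) + norm (F z - F c) := by
    calc norm (F z) = norm (F c + (F z - F c)) := by ring_nf
      _ ≤ norm (F c) + norm (F z - F c) := norm_add_le _ _
  have tri2 : norm (F z + (starRingEnd ℂ) (F c) - 2 * M)
      ≤ norm (F z) + norm (F c) + 2 * M := by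
    calc norm (F z + (starRingEnd ℂ) (F c) - 2 * M)
        ≤ norm (F z + (starRingEnd ℂ) (F c)) + norm ((2 : ℂ) * M) := by
          apply norm_sub_le
      _ ≤ norm (F z) + norm ((starRingEnd ℂ) (F c)) + norm ((2:ℂ) * M) := by
          linarith [norm_add_le (F z) ((starRingEnd ℂ) (F c))]
      _ = norm (F z) + norm (F c) + 2 * M := by
          rw [Complex.norm_conj]
          congr 1
          rw [norm_mul, Complex.norm_two, Complex.norm_real, Real.norm_eq_abs, _root_.abs_of_nonneg hM0]
  have hh : norm (F z - F c)
      ≤ (1/2) * (norm (F z) + norm (F c) + 2 * M) := by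
    calc norm (F z - F c)
        ≤ t * norm (F z + (starRingEnd ℂ) (F c) - 2 * M) := h
      _ ≤ (1/2) * (norm (F z) + norm (F c) + 2 * M) := by
          apply mul_le_mul ht12 tri2 (norm_nonneg _) (by norm_num)
  linarith

/-- Two holomorphic functions whose real parts agree near a point have the same
derivative there. -/
lemma deriv_eq_of_re_eq {F₁ F₂ : ℂ → ℂ} {w : ℂ}
    (h₁ : DifferentiableAt ℂ F₁ w) (h₂ : DifferentiableAt ℂ F₂ w)
    (h : ∀ᶠ z in nhds w, (F₁ z).re = (F₂ z).re) :
    deriv F₁ w = deriv F₂ w := by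
  have key : ∀ (F : ℂ → ℂ) (d : ℂ) (v : ℂ), HasDerivAt F d w →
      HasDerivAt (fun t : ℝ => (F (w + ↑t * v)).re) ((d * v).re) 0 := by
    intro F d v hF
    have hline : HasDerivAt (fun z : ℂ => w + z * v) v 0 := by
      simpa using ((hasDerivAt_id (0:ℂ)).mul_const v).const_add w
    have hcomp : HasDerivAt (fun z : ℂ => F (w + z * v)) (d * v) 0 := by
      have := HasDerivAt.comp (0:ℂ) (by simpa using hF) hline
      simpa [mul_comm, Function.comp_def] using this
    have hcomp' : HasDerivAt (fun z : ℂ => F (w + z * v)) (d * v) ((0:ℝ):ℂ) := by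
      simpa using hcomp
    exact hcomp'.real_of_complex
  have k₁ := key F₁ (deriv F₁ w) 1 h₁.hasDerivAt
  have k₂ := key F₂ (deriv F₂ w) 1 h₂.hasDerivAt
  have k₁I := key F₁ (deriv F₁ w) Complex.I h₁.hasDerivAt
  have k₂I := key F₂ (deriv F₂ w) Complex.I h₂.hasDerivAt
  have heq : ∀ v : ℂ, (fun t : ℝ => (F₁ (w + ↑t * v)).re)
      =ᶠ[nhds (0:ℝ)] (fun t : ℝ => (F₂ (w + ↑t * v)).re) := by
    intro v
    have hcont : Tendsto (fun t : ℝ => w + ↑t * v) (nhds 0) (nhds w) := by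
      have : Continuous (fun t : ℝ => w + ↑t * v) := by continuity
      simpa using this.tendsto 0
    exact (hcont.eventually h)
  have e1 : (deriv F₁ w * 1).re = (deriv F₂ w * 1).re :=
    HasDerivAt.unique (k₁.congr_of_eventuallyEq (heq 1).symm) k₂
  have eI : (deriv F₁ w * Complex.I).re = (deriv F₂ w * Complex.I).re :=
    HasDerivAt.unique (k₁I.congr_of_eventuallyEq (heq Complex.I).symm) k₂I
  simp only [mul_one, Complex.mul_I_re] at e1 eI
  exact Complex.ext e1 (by linarith)

/-- A holomorphic function on a closed ball has a primitive on a smaller concentric ball. -/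
lemma exists_primitive {g : ℂ → ℂ} {c : ℂ} {R σ : ℝ} (hσ : 0 < σ) (hσR : σ < R)
    (hg : DifferentiableOn ℂ g (closedBall c R)) :
    ∃ G : ℂ → ℂ, ∀ z ∈ ball c σ, HasDerivAt G (g z) z := by
  have hR : 0 < R := hσ.trans hσR
  set Rn : ℝ≥0 := R.toNNReal with hRn
  have hRn' : (Rn : ℝ) = R := Real.coe_toNNReal R hR.le
  have hg' : DifferentiableOn ℂ g (closedBall c Rn) := by rwa [hRn']
  have hp : HasFPowerSeriesOnBall g (cauchyPowerSeries g c Rn) c Rn :=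
    hg'.hasFPowerSeriesOnBall (by simpa [hRn] using hR)
  set p := cauchyPowerSeries g c (Rn : ℝ) with hpdef
  set a : ℕ → ℂ := fun n => p.coeff n with ha
  -- sum formula
  have hsum : ∀ z ∈ ball c σ, HasSum (fun n => (z - c) ^ n * a n) (g z) := by
    intro z hz
    have hy : (z - c) ∈ Metric.eball (0 : ℂ) Rn := by
      rw [Metric.mem_eball, edist_zero_right]
      exact_mod_cast ENNReal.coe_lt_coe.2 (by
        rw [← NNReal.coe_lt_coe, coe_nnnorm, hRn']
        exact lt_trans (mem_ball_iff_norm.1 hz) hσR)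
    have hsum0 := hp.hasSum hy
    simp only [FormalMultilinearSeries.apply_eq_pow_smul_coeff, smul_eq_mul] at hsum0
    have e : c + (z - c) = z := by ring
    rw [e] at hsum0
    exact hsum0
  -- coefficient bounds
  set σ' : ℝ := (σ + R) / 2 with hσ'
  have hσ'0 : 0 < σ' := by positivity
  have hσσ' : σ < σ' := by rw [hσ']; linarith
  have hσ'R : σ' < R := by rw [hσ']; linarith
  clear_value σ'
  obtain ⟨C, hC0, hC⟩ : ∃ C > 0, ∀ n, ‖p n‖ * σ' ^ n ≤ C := by
    have hcoe : ((σ'.toNNReal : ℝ)) = σ' := Real.coe_toNNReal _ hσ'0.le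
    obtain ⟨C, hC0, hC⟩ := p.norm_mul_pow_le_of_lt_radius (r := σ'.toNNReal) (by
      calc ((σ'.toNNReal : ℝ≥0∞)) < (Rn : ℝ≥0∞) := by
            rw [ENNReal.coe_lt_coe, ← NNReal.coe_lt_coe, hcoe, hRn']
            exact hσ'R
        _ ≤ p.radius := hp.r_le)
    exact ⟨C, hC0, fun n => by have := hC n; rwa [hcoe] at this⟩
  have hcoeff : ∀ n, ‖a n‖ * σ' ^ n ≤ C := by
    intro n
    have := hC n
    rwa [p.norm_apply_eq_norm_coef] at this
  -- the primitive as a series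
  set u : ℕ → ℂ → ℂ := fun n z => (((n : ℂ) + 1)⁻¹ * a n) * (z - c) ^ (n + 1) with hu
  set b : ℕ → ℝ := fun n => C * σ * (σ / σ') ^ n with hb
  have hbsum : Summable b := by
    apply Summable.mul_left
    apply summable_geometric_of_lt_one (by positivity)
    rw [div_lt_one hσ'0]
    exact hσσ'
  have hub : ∀ n z, z ∈ ball c σ → ‖u n z‖ ≤ b n := by
    intro n z hz
    have hzc : ‖z - c‖ ≤ σ := (mem_ball_iff_norm.1 hz).le
    have h1 : ‖u n z‖ ≤ ‖a n‖ * σ ^ (n + 1) := by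
      rw [hu]
      simp only [norm_mul, norm_pow, norm_inv]
      have hn1 : (1:ℝ) ≤ ‖(n : ℂ) + 1‖ := by
        rw [show ((n : ℂ) + 1) = ((n + 1 : ℕ) : ℂ) by push_cast; ring]
        rw [Complex.norm_natCast]
        exact_mod_cast Nat.one_le_iff_ne_zero.2 (Nat.succ_ne_zero n)
      have hinv : ‖(n : ℂ) + 1‖⁻¹ ≤ 1 := by
        rw [inv_le_one_iff₀]; right; exact hn1
      calc ‖(n:ℂ)+1‖⁻¹ * ‖a n‖ * ‖z - c‖ ^ (n+1)
          ≤ 1 * ‖a n‖ * σ ^ (n+1) := by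
            apply mul_le_mul (mul_le_mul hinv le_rfl (norm_nonneg _) zero_le_one)
              (pow_le_pow_left₀ (norm_nonneg _) hzc _) (by positivity) (by positivity)
        _ = ‖a n‖ * σ ^ (n+1) := by ring
    have h2 : ‖a n‖ * σ ^ (n + 1) ≤ b n := by
      rw [hb]
      have hσn : (0:ℝ) < σ' ^ n := by positivity
      have := hcoeff n
      have hbn : ‖a n‖ ≤ C / σ' ^ n := by
        rw [le_div_iff₀ hσn]; exact this
      calc ‖a n‖ * σ ^ (n+1) ≤ (C / σ' ^ n) * σ ^ (n+1) := by
            apply mul_le_mul_of_nonneg_right hbn (by positivity)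
        _ = C * σ * (σ / σ') ^ n := by
            rw [div_pow, pow_succ]
            field_simp
    exact h1.trans h2
  have hud : ∀ n, DifferentiableOn ℂ (u n) (ball c σ) := by
    intro n
    apply DifferentiableOn.const_mul
    exact (DifferentiableOn.pow ((differentiableOn_id).sub (differentiableOn_const c)) _)
  have hGdiff : DifferentiableOn ℂ (fun z => ∑' n, u n z) (ball c σ) :=
    differentiableOn_tsum_of_summable_norm hbsum hud isOpen_ball hub
  refine ⟨fun z => ∑' n, u n z, fun z hz => ?_⟩
  have hder := hasSum_deriv_of_summable_norm hbsum hud isOpen_ball hub hz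
  have hderv : ∀ n, deriv (u n) z = (z - c) ^ n * a n := by
    intro n
    have h1 : HasDerivAt (fun w : ℂ => (w - c) ^ (n + 1))
        ((n + 1 : ℕ) * (z - c) ^ n * 1) z := by
      have := ((hasDerivAt_id z).sub_const c).pow (n + 1)
      simpa [Pi.pow_def] using this
    have h2 : HasDerivAt (u n) ((((n:ℂ) + 1)⁻¹ * a n) * ((n + 1 : ℕ) * (z - c) ^ n * 1)) z :=
      h1.const_mul _
    rw [h2.deriv]
    have hne : ((n : ℂ) + 1) ≠ 0 := by
      have : ((n + 1 : ℕ) : ℂ) ≠ 0 := Nat.cast_ne_zero.2 (Nat.succ_ne_zero n)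
      push_cast at this
      exact this
    push_cast
    field_simp
  have : HasSum (fun n => (z - c) ^ n * a n) (deriv (fun w => ∑' n, u n w) z) := by
    rw [show (fun n => (z - c) ^ n * a n) = fun n => deriv (u n) z from
      funext fun n => (hderv n).symm]
    exact hder
  have hdg : deriv (fun w => ∑' n, u n w) z = g z := this.unique (hsum z hz)
  have := (hGdiff.differentiableAt (isOpen_ball.mem_nhds hz)).hasDerivAt
  rwa [hdg] at this

/-- Propagation of a locally-stable property over a preconnected set. -/
lemma propagate {D : Set ℂ} (hDp : IsPreconnected D) {P : ℂ → Prop}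
    (hloc : ∀ z ∈ D, ∃ δ > 0, ∀ w ∈ ball z δ ∩ D, (P z ↔ P w))
    {z₀ : ℂ} (hz₀ : z₀ ∈ D) (hP : P z₀) {z : ℂ} (hz : z ∈ D) : P z := by
  classical
  choose! δ hδ hiff using hloc
  set U : Set ℂ := ⋃ (x : ℂ) (_ : x ∈ D ∧ P x), ball x (δ x) with hU
  set V : Set ℂ := ⋃ (x : ℂ) (_ : x ∈ D ∧ ¬ P x), ball x (δ x) with hV
  have hUo : IsOpen U := isOpen_iUnion fun x => isOpen_iUnion fun _ => isOpen_ball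
  have hVo : IsOpen V := isOpen_iUnion fun x => isOpen_iUnion fun _ => isOpen_ball
  have hcover : D ⊆ U ∪ V := by
    intro x hx
    by_cases hPx : P x
    · exact Or.inl (mem_iUnion.2 ⟨x, mem_iUnion.2 ⟨⟨hx, hPx⟩, mem_ball_self (hδ x hx)⟩⟩)
    · exact Or.inr (mem_iUnion.2 ⟨x, mem_iUnion.2 ⟨⟨hx, hPx⟩, mem_ball_self (hδ x hx)⟩⟩)
  have hdisj : (D ∩ (U ∩ V)) = ∅ := by
    rw [eq_empty_iff_forall_notMem]
    rintro w ⟨hwD, hwU, hwV⟩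
    obtain ⟨x, hx⟩ := mem_iUnion.1 hwU
    obtain ⟨⟨hxD, hxP⟩, hwx⟩ := mem_iUnion.1 hx
    obtain ⟨y, hy⟩ := mem_iUnion.1 hwV
    obtain ⟨⟨hyD, hyP⟩, hwy⟩ := mem_iUnion.1 hy
    have h1 : P w := (hiff x hxD w ⟨hwx, hwD⟩).1 hxP
    have h2 : ¬ P w := fun hPw => hyP ((hiff y hyD w ⟨hwy, hwD⟩).2 hPw)
    exact h2 h1
  by_cases hzV : z ∈ U
  · obtain ⟨x, hx⟩ := mem_iUnion.1 hzV
    obtain ⟨⟨hxD, hxP⟩, hzx⟩ := mem_iUnion.1 hx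
    exact (hiff x hxD z ⟨hzx, hz⟩).1 hxP
  · exfalso
    have hzV' : z ∈ V := (hcover hz).resolve_left hzV
    have hne1 : (D ∩ U).Nonempty :=
      ⟨z₀, hz₀, mem_iUnion.2 ⟨z₀, mem_iUnion.2 ⟨⟨hz₀, hP⟩, mem_ball_self (hδ z₀ hz₀)⟩⟩⟩
    have hne2 : (D ∩ V).Nonempty := ⟨z, hz, hzV'⟩
    have := hDp U V hUo hVo hcover hne1 hne2
    rw [hdisj] at this
    exact this.ne_empty rfl

/-- A harmonic function is the real part of a holomorphic function on every ball
whose double is contained in `D`. -/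
lemma exists_rep {f : ℂ → ℝ} {D : Set ℂ} (hD : IsOpen D) (hf : HarmonicOnSet f D)
    {c : ℂ} {R : ℝ} (hR : 0 < R) (hsub : closedBall c (2*R) ⊆ D) :
    ∃ F : ℂ → ℂ, DifferentiableOn ℂ F (ball c R) ∧
      (∀ z ∈ ball c R, f z = (F z).re) ∧ (F c).im = 0 := by
  classical
  choose! ε hε hballD Floc hFd hFre using hf
  set g : ℂ → ℂ := fun w => deriv (Floc w) w with hg
  have hkey : ∀ z ∈ D, ∀ w ∈ ball z (ε z), g w = deriv (Floc z) w := by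
    intro z hz w hw
    have hwD : w ∈ D := hballD z hz hw
    have h₁ : DifferentiableAt ℂ (Floc w) w :=
      (hFd w hwD).differentiableAt (isOpen_ball.mem_nhds (mem_ball_self (hε w hwD)))
    have h₂ : DifferentiableAt ℂ (Floc z) w :=
      (hFd z hz).differentiableAt (isOpen_ball.mem_nhds hw)
    apply deriv_eq_of_re_eq h₁ h₂
    have hopen : IsOpen (ball w (ε w) ∩ ball z (ε z)) := isOpen_ball.inter isOpen_ball
    have hmem : w ∈ ball w (ε w) ∩ ball z (ε z) := ⟨mem_ball_self (hε w hwD), hw⟩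
    filter_upwards [hopen.mem_nhds hmem] with x hx
    rw [← hFre w hwD x hx.1, ← hFre z hz x hx.2]
  have hgd : DifferentiableOn ℂ g D := by
    intro z hz
    have h1 : DifferentiableOn ℂ (deriv (Floc z)) (ball z (ε z)) :=
      (((hFd z hz).analyticOnNhd isOpen_ball).deriv).differentiableOn
    have h2 : DifferentiableAt ℂ (deriv (Floc z)) z :=
      h1.differentiableAt (isOpen_ball.mem_nhds (mem_ball_self (hε z hz)))
    have h3 : DifferentiableAt ℂ g z := by
      apply h2.congr_of_eventuallyEq
      filter_upwards [isOpen_ball.mem_nhds (mem_ball_self (hε z hz))] with x hx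
      exact hkey z hz x hx
    exact h3.differentiableWithinAt
  have hgd2 : DifferentiableOn ℂ g (closedBall c (2*R)) := hgd.mono hsub
  obtain ⟨G, hG⟩ := exists_primitive (σ := (3/2)*R) (by positivity) (by linarith) hgd2
  have hBsub : ball c R ⊆ D := fun w hw =>
    hsub (mem_closedBall.2 (by have := mem_ball.1 hw; linarith))
  have hBsub' : ball c R ⊆ ball c ((3/2)*R) := ball_subset_ball (by linarith)
  -- local constancy of Re G - f on ball c R
  set ψ : ℂ → ℝ := fun w => (G w).re - f w with hψ
  have hloc : ∀ z ∈ ball c R, ∃ δ > 0, ∀ w ∈ ball z δ ∩ ball c R, ψ z = ψ w := by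
    intro z hz
    have hzD : z ∈ D := hBsub hz
    set δ : ℝ := min (ε z) (R - dist z c) with hδdef
    have hδ0 : 0 < δ := lt_min (hε z hzD) (by simp [mem_ball] at hz; linarith)
    refine ⟨δ, hδ0, fun w hw => ?_⟩
    have hwε : ball z δ ⊆ ball z (ε z) := ball_subset_ball (min_le_left _ _)
    have hwB : ball z δ ⊆ ball c R := by
      apply ball_subset_ball'
      have h1 : δ ≤ R - dist z c := min_le_right _ _
      linarith
    have hconst : ∀ x ∈ ball z δ, G x - Floc z x = G z - Floc z z := by
      intro x hx
      have hmvt := (convex_ball z δ).norm_image_sub_le_of_norm_hasDerivWithin_le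
        (f := fun y => G y - Floc z y) (f' := fun _ => 0) (C := 0)
        (fun y hy => by
          have hyε : y ∈ ball z (ε z) := hwε hy
          have hG' : HasDerivAt G (g y) y := hG y (hBsub' (hwB hy))
          have hF0 : HasDerivAt (Floc z) (deriv (Floc z) y) y :=
            ((hFd z hzD).differentiableAt (isOpen_ball.mem_nhds hyε)).hasDerivAt
          have hF' : HasDerivAt (Floc z) (g y) y := by
            rwa [← hkey z hzD y hyε] at hF0
          simpa [Pi.sub_def] using (hG'.sub hF').hasDerivWithinAt)
        (fun y _ => by simp) (mem_ball_self hδ0) hx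
      simp only [zero_mul, norm_le_zero_iff, sub_eq_zero] at hmvt
      exact hmvt
    have := hconst w hw.1
    have hre := congrArg Complex.re this
    simp only [Complex.sub_re] at hre
    have h1 : f w = (Floc z w).re := hFre z hzD w (hwε hw.1)
    have h2 : f z = (Floc z z).re := hFre z hzD z (mem_ball_self (hε z hzD))
    rw [hψ]
    simp only
    rw [h1, h2]
    linarith
  have hcX : c ∈ ball c R := mem_ball_self hR
  have hval : ∀ z ∈ ball c R, ψ z = ψ c := by
    intro z hz
    have := propagate (convex_ball c R).isPreconnected
      (P := fun w => ψ w = ψ c)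
      (fun x hx => by
        obtain ⟨δ, hδ0, hδ⟩ := hloc x hx
        exact ⟨δ, hδ0, fun w hw => by simp only [hδ w hw]⟩) hcX rfl hz
    exact this
  refine ⟨fun w => G w - (((G c).re - f c : ℝ) + (G c).im * Complex.I), ?_, ?_, ?_⟩
  · apply DifferentiableOn.sub _ (differentiableOn_const _)
    intro x hx
    exact ((hG x (hBsub' hx)).differentiableAt).differentiableWithinAt
  · intro z hz
    have := hval z hz
    rw [hψ] at this
    simp only at this
    simp [Complex.sub_re, Complex.add_re, Complex.ofReal_re, Complex.mul_re,
      Complex.I_re, Complex.I_im, Complex.ofReal_im]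
    linarith
  · simp [Complex.sub_im, Complex.add_im, Complex.mul_im, Complex.I_re, Complex.I_im]

/-- Harnack inequality for nonnegative harmonic functions. -/
lemma harnack_harmonic {f : ℂ → ℝ} {D : Set ℂ} (hD : IsOpen D)
    (hf : HarmonicOnSet f D) (hpos : ∀ z ∈ D, 0 ≤ f z)
    {c : ℂ} {R : ℝ} (hR : 0 < R) (hsub : closedBall c (2*R) ⊆ D)
    {z : ℂ} (hz : dist z c ≤ R / 2) :
    f z ≤ 3 * f c ∧ f c ≤ 3 * f z := by
  obtain ⟨F, hFd, hFre, _⟩ := exists_rep hD hf hR hsub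
  have hBsub : ball c R ⊆ D := fun w hw =>
    hsub (mem_closedBall.2 (by have := mem_ball.1 hw; linarith))
  have hzball : z ∈ ball c R := mem_ball.2 (lt_of_le_of_lt hz (by linarith))
  have hcball : c ∈ ball c R := mem_ball_self hR
  have hre : ∀ w ∈ ball c R, 0 ≤ (F w).re := fun w hw => by
    rw [← hFre w hw]; exact hpos w (hBsub hw)
  have := harnack_pt hFd hre hzball hz
  rwa [← hFre z hzball, ← hFre c hcball] at this

/-- The local package: uniform bound, representative, and Lipschitz estimate for a
sequence of nonnegative harmonic functions that is bounded at each point. -/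
lemma local_package {hs : ℕ → ℂ → ℝ} {D : Set ℂ} (hD : IsOpen D)
    (hharm : ∀ n, HarmonicOnSet (hs n) D) (hpos : ∀ n, ∀ z ∈ D, 0 ≤ hs n z)
    (hbnd : ∀ z ∈ D, ∃ C, ∀ n, hs n z ≤ C) {z : ℂ} (hz : z ∈ D) :
    ∃ R > 0, closedBall z (2*R) ⊆ D ∧
    ∃ F : ℕ → ℂ → ℂ, (∀ n, DifferentiableOn ℂ (F n) (ball z R)) ∧
      (∀ n, ∀ w ∈ ball z R, hs n w = (F n w).re) ∧
      (∀ n, (F n z).im = 0) ∧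
      ∃ L ≥ 0, (∀ n, ∀ w ∈ ball z (R/4), ∀ w' ∈ ball z (R/4),
          |hs n w - hs n w'| ≤ L * dist w w') := by
  obtain ⟨ε, hε0, hεD⟩ := Metric.isOpen_iff.1 hD z hz
  set R : ℝ := ε / 3 with hRdef
  have hR0 : 0 < R := by positivity
  have hsub : closedBall z (2*R) ⊆ D := fun w hw => by
    apply hεD
    rw [mem_ball]
    rw [mem_closedBall] at hw
    calc dist w z ≤ 2 * R := hw
      _ < ε := by rw [hRdef]; linarith
  have hBsub : ball z R ⊆ D := fun w hw =>
    hsub (mem_closedBall.2 (by have := mem_ball.1 hw; linarith))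
  obtain ⟨C, hC⟩ := hbnd z hz
  choose F hFd hFre hFim using fun n => exists_rep hD (hharm n) hR0 hsub
  have hre : ∀ n, ∀ w ∈ ball z R, 0 ≤ (F n w).re := fun n w hw => by
    rw [← hFre n w hw]; exact hpos n w (hBsub hw)
  have hC0 : 0 ≤ C := le_trans (hpos 0 z hz) (hC 0)
  -- |F n z| ≤ C
  have hFz : ∀ n, norm (F n z) ≤ C := by
    intro n
    have h1 : (F n z).re = hs n z := (hFre n z (mem_ball_self hR0)).symm
    have : norm (F n z) = |(F n z).re| := by
      rw [Complex.norm_def, Complex.normSq_apply, hFim n, mul_zero, add_zero,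
        ← Real.sqrt_sq_eq_abs]
      ring_nf
    rw [this, h1, _root_.abs_of_nonneg (hpos n z hz)]
    exact hC n
  -- |F n w| ≤ 3C on ball z (R/2)
  have hFbd : ∀ n, ∀ w ∈ closedBall z (R/2), norm (F n w) ≤ 3 * C := by
    intro n w hw
    rw [mem_closedBall] at hw
    have hwball : w ∈ ball z R := mem_ball.2 (lt_of_le_of_lt hw (by linarith))
    calc norm (F n w) ≤ 3 * norm (F n z) :=
          size_pt (hFd n) (hre n) hwball hw
      _ ≤ 3 * C := by linarith [hFz n]
  -- derivative bound on ball z (R/4)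
  set L : ℝ := (6 * C + 1) / (R / 4) with hLdef
  have hL0 : 0 ≤ L := by positivity
  have hderiv : ∀ n, ∀ w ∈ ball z (R/4), ‖deriv (F n) w‖ ≤ L := by
    intro n w hw
    rw [mem_ball] at hw
    have hwz : dist w z < R / 4 := hw
    have hsub2 : ball w (R/4) ⊆ closedBall z (R/2) := fun x hx => by
      rw [mem_ball] at hx
      rw [mem_closedBall]
      calc dist x z ≤ dist x w + dist w z := dist_triangle _ _ _
        _ ≤ R/2 := by linarith
    have hFdw : DifferentiableOn ℂ (F n) (ball w (R/4)) :=
      (hFd n).mono (fun x hx => by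
        have := hsub2 hx
        rw [mem_closedBall] at this
        exact mem_ball.2 (lt_of_le_of_lt this (by linarith)))
    have hmaps : MapsTo (F n) (ball w (R/4)) (ball (F n w) (6*C+1)) := by
      intro x hx
      rw [mem_ball, dist_eq_norm]
      calc ‖F n x - F n w‖ ≤ ‖F n x‖ + ‖F n w‖ := norm_sub_le _ _
        _ ≤ 3*C + 3*C := by
            have h1 := hFbd n x (hsub2 hx)
            have h2 := hFbd n w (hsub2 (mem_ball_self (by positivity)))
            exact add_le_add h1 h2
        _ < 6*C + 1 := by linarith
    have := Complex.norm_deriv_le_div_of_mapsTo_ball hFdw (hmaps.mono_right ball_subset_closedBall) (by positivity)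
    rwa [hLdef]
  -- Lipschitz estimate
  refine ⟨R, hR0, hsub, F, hFd, hFre, hFim, L, hL0, ?_⟩
  intro n w hw w' hw'
  have hball4 : ball z (R/4) ⊆ ball z R := ball_subset_ball (by linarith)
  have hmvt := Convex.norm_image_sub_le_of_norm_deriv_le
    (f := F n) (s := ball z (R/4)) (C := L)
    (fun x hx => (hFd n).differentiableAt (isOpen_ball.mem_nhds (hball4 hx)))
    (fun x hx => hderiv n x hx) (convex_ball z (R/4)) hw' hw
  have hrew : hs n w = (F n w).re := hFre n w (hball4 hw)
  have hrew' : hs n w' = (F n w').re := hFre n w' (hball4 hw')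
  rw [hrew, hrew']
  calc |(F n w).re - (F n w').re| = |(F n w - F n w').re| := by rw [Complex.sub_re]
    _ ≤ norm (F n w - F n w') := Complex.abs_re_le_norm _
    _ ≤ L * ‖w - w'‖ := by exact hmvt
    _ = L * dist w w' := by rw [dist_eq_norm]

lemma exists_minimal_majorant {D : Set ℂ} (hD : IsOpen D) (hDc : IsConnected D)
    {uN : ℕ → ℂ → ℝ} (hu : ∀ n, InfHarmonicOn (uN n) D)
    {u : ℂ → ℝ≥0∞}
    (hconv : ∀ z ∈ D,
      Filter.Tendsto (fun n => ENNReal.ofReal (uN n z)) Filter.atTop (nhds (u z)))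
    (hfin : ∀ z ∈ D, u z ≠ ⊤) {z₀ : ℂ} (hz₀ : z₀ ∈ D) :
    ∃ h : ℂ → ℝ, HarmonicOnSet h D ∧ (∀ z ∈ D, 0 ≤ h z) ∧
      (∀ z ∈ D, (u z).toReal ≤ h z) ∧ h z₀ = (u z₀).toReal := by
  classical
  choose H hHne hHharm hHpos hHinf using hu
  have hbb : ∀ n, ∀ z ∈ D, BddBelow ((fun h => h z) '' H n) := by
    intro n z hz
    exact ⟨0, by rintro x ⟨g, hg, rfl⟩; exact hHpos n g hg z hz⟩
  have hnn : ∀ n, ∀ z ∈ D, 0 ≤ uN n z := by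
    intro n z hz
    rw [hHinf n z hz]
    apply Real.sInf_nonneg
    rintro x ⟨g, hg, rfl⟩
    exact hHpos n g hg z hz
  have hmaj : ∀ n, ∀ g ∈ H n, ∀ z ∈ D, uN n z ≤ g z := by
    intro n g hg z hz
    rw [hHinf n z hz]
    exact csInf_le (hbb n z hz) (mem_image_of_mem _ hg)
  have htoReal : ∀ z ∈ D, Tendsto (fun n => uN n z) atTop (𝓝 ((u z).toReal)) := by
    intro z hz
    have h1 := (ENNReal.tendsto_toReal (hfin z hz)).comp (hconv z hz)
    have h2 : (fun n => (ENNReal.ofReal (uN n z)).toReal) = fun n => uN n z := by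
      funext n
      exact ENNReal.toReal_ofReal (hnn n z hz)
    rwa [Function.comp_def, h2] at h1
  -- choose near-minimizing majorants at z₀
  have hpick : ∀ n, ∃ g ∈ H n, g z₀ < uN n z₀ + 1/(n+1) := by
    intro n
    have hlt : sInf ((fun h => h z₀) '' H n) < uN n z₀ + 1/(n+1) := by
      rw [← hHinf n z₀ hz₀]
      have : (0:ℝ) < 1/(n+1) := by positivity
      linarith
    obtain ⟨x, hx, hxlt⟩ := exists_lt_of_csInf_lt ((hHne n).image _) hlt
    obtain ⟨g, hg, rfl⟩ := hx
    exact ⟨g, hg, hxlt⟩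
  choose hn hnH hnlt using hpick
  have hnharm : ∀ n, HarmonicOnSet (hn n) D := fun n => hHharm n _ (hnH n)
  have hnpos : ∀ n, ∀ z ∈ D, 0 ≤ hn n z := fun n => hHpos n _ (hnH n)
  have hnmaj : ∀ n, ∀ z ∈ D, uN n z ≤ hn n z := fun n => hmaj n _ (hnH n)
  -- boundedness at z₀
  have hb0 : ∃ C, ∀ n, hn n z₀ ≤ C := by
    obtain ⟨B, hB⟩ := (htoReal z₀ hz₀).bddAbove_range
    refine ⟨B + 1, fun n => ?_⟩
    have h1 : uN n z₀ ≤ B := hB (mem_range_self n)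
    have h2 : 1/((n:ℝ)+1) ≤ 1 := by
      rw [div_le_one (by positivity)]
      simp
    linarith [(hnlt n).le]
  -- propagate boundedness over D
  have hbnd : ∀ z ∈ D, ∃ C, ∀ n, hn n z ≤ C := by
    intro z hz
    refine propagate hDc.isPreconnected (P := fun w => ∃ C, ∀ n, hn n w ≤ C)
      ?_ hz₀ hb0 hz
    intro x hx
    obtain ⟨ε, hε0, hεD⟩ := Metric.isOpen_iff.1 hD x hx
    set R : ℝ := ε / 3 with hRdef
    have hR0 : 0 < R := by positivity
    have hsub : closedBall x (2*R) ⊆ D := fun w hw => by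
      apply hεD
      rw [mem_ball]; rw [mem_closedBall] at hw
      calc dist w x ≤ 2*R := hw
        _ < ε := by rw [hRdef]; linarith
    refine ⟨R/2, by positivity, fun w hw => ?_⟩
    have hdist : dist w x ≤ R/2 := (mem_ball.1 hw.1).le
    constructor
    · rintro ⟨C, hC⟩
      refine ⟨3*C, fun n => ?_⟩
      have := (harnack_harmonic hD (hnharm n) (hnpos n) hR0 hsub hdist).1
      calc hn n w ≤ 3 * hn n x := this
        _ ≤ 3*C := by linarith [hC n]
    · rintro ⟨C, hC⟩
      refine ⟨3*C, fun n => ?_⟩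
      have := (harnack_harmonic hD (hnharm n) (hnpos n) hR0 hsub hdist).2
      calc hn n x ≤ 3 * hn n w := this
        _ ≤ 3*C := by linarith [hC n]
  -- countable dense subset of D
  obtain ⟨T, hTc, hTd⟩ := TopologicalSpace.exists_countable_dense ℂ
  have hTD : (T ∩ D).Countable := hTc.mono inter_subset_left
  have hTDne : (T ∩ D).Nonempty := by
    obtain ⟨x, hx1, hx2⟩ := hTd.inter_open_nonempty D hD hDc.nonempty
    exact ⟨x, hx2, hx1⟩
  obtain ⟨e, he⟩ := hTD.exists_eq_range hTDne
  have heD : ∀ k, e k ∈ D := fun k => by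
    have : e k ∈ T ∩ D := he ▸ mem_range_self k
    exact this.2
  -- extraction via compactness of the product of intervals
  choose Ck hCk using fun k => hbnd (e k) (heD k)
  have hyS : ∀ n, (fun k => hn n (e k)) ∈ Set.pi univ (fun k => Icc 0 (Ck k)) := by
    intro n k _
    exact ⟨hnpos n _ (heD k), hCk k n⟩
  obtain ⟨a, _, φ, hφmono, hφtendsto⟩ :=
    (isCompact_univ_pi fun k => isCompact_Icc).tendsto_subseq hyS
  have hconvk : ∀ k, Tendsto (fun n => hn (φ n) (e k)) atTop (𝓝 (a k)) := by
    intro k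
    exact (tendsto_pi_nhds.1 hφtendsto) k
  -- pointwise Cauchy on D
  have hcauchy : ∀ w ∈ D, CauchySeq (fun n => hn (φ n) w) := by
    intro w hw
    obtain ⟨R, hR0, hsubR, F, hFd, hFre, hFim, L, hL0, hLip⟩ :=
      local_package hD hnharm hnpos hbnd hw
    rw [Metric.cauchySeq_iff]
    intro ε hε
    set r : ℝ := min (R/8) (ε/(5*(L+1))) with hrdef
    have hr0 : 0 < r := lt_min (by positivity) (by positivity)
    obtain ⟨t, htball, htT⟩ := hTd.inter_open_nonempty (ball w r) isOpen_ball
      (nonempty_ball.2 hr0)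
    have htw : dist t w < r := mem_ball.1 htball
    have htBR4 : t ∈ ball w (R/4) := mem_ball.2 (lt_of_lt_of_le htw
      (le_trans (min_le_left _ _) (by linarith)))
    have htD : t ∈ D := by
      apply hsubR
      rw [mem_closedBall]
      have := mem_ball.1 htBR4
      linarith
    obtain ⟨k, hk⟩ : ∃ k, e k = t := by
      have : t ∈ T ∩ D := ⟨htT, htD⟩
      rw [he] at this
      exact this
    have hck : CauchySeq (fun n => hn (φ n) (e k)) := (hconvk k).cauchySeq
    rw [Metric.cauchySeq_iff] at hck
    obtain ⟨N, hN⟩ := hck (ε/5) (by positivity)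
    refine ⟨N, fun m hm n hn' => ?_⟩
    have hwb : w ∈ ball w (R/4) := mem_ball_self (by positivity)
    have hLw : ∀ l, |hn l w - hn l t| ≤ L * dist w t := fun l =>
      hLip l w hwb t htBR4
    have hLr : L * dist w t ≤ ε/5 := by
      have h1 : dist w t ≤ ε/(5*(L+1)) := by
        rw [dist_comm]
        exact le_trans htw.le (min_le_right _ _)
      calc L * dist w t ≤ L * (ε/(5*(L+1))) :=
            mul_le_mul_of_nonneg_left h1 hL0
        _ ≤ ε/5 := by
            rw [← mul_div_assoc, div_le_div_iff₀ (by positivity) (by norm_num)]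
            nlinarith
    have hcoord : dist (hn (φ m) (e k)) (hn (φ n) (e k)) < ε/5 := hN m hm n hn'
    rw [Real.dist_eq] at hcoord ⊢
    rw [hk] at hcoord
    have tri : |hn (φ m) w - hn (φ n) w| ≤ |hn (φ m) w - hn (φ m) t|
        + |hn (φ m) t - hn (φ n) t| + |hn (φ n) t - hn (φ n) w| := by
      have t1 := abs_sub_le (hn (φ m) w) (hn (φ m) t) (hn (φ n) w)
      have t2 := abs_sub_le (hn (φ m) t) (hn (φ n) t) (hn (φ n) w)
      linarith
    have h1 := hLw (φ m)
    have h2 := hLw (φ n)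
    have h3 : |hn (φ n) t - hn (φ n) w| = |hn (φ n) w - hn (φ n) t| := abs_sub_comm _ _
    rw [h3] at tri
    linarith
  -- the pointwise limit
  have hlim : ∀ w, w ∈ D → ∃ l, Tendsto (fun n => hn (φ n) w) atTop (𝓝 l) :=
    fun w hw => cauchySeq_tendsto_of_complete (hcauchy w hw)
  choose! h hh using hlim
  -- nonnegativity
  have hpos' : ∀ z ∈ D, 0 ≤ h z := fun z hz =>
    ge_of_tendsto (hh z hz) (Eventually.of_forall fun n => hnpos (φ n) z hz)
  -- majorant property
  have hmaj' : ∀ z ∈ D, (u z).toReal ≤ h z := by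
    intro z hz
    have h1 : Tendsto (fun n => uN (φ n) z) atTop (𝓝 ((u z).toReal)) :=
      (htoReal z hz).comp hφmono.tendsto_atTop
    exact le_of_tendsto_of_tendsto' h1 (hh z hz) fun n => hnmaj (φ n) z hz
  -- value at the basepoint
  have hval : h z₀ = (u z₀).toReal := by
    refine le_antisymm ?_ (hmaj' z₀ hz₀)
    have h1 : Tendsto (fun n => uN (φ n) z₀ + 1/((φ n : ℝ)+1)) atTop
        (𝓝 ((u z₀).toReal + 0)) := by
      apply Tendsto.add
      · exact (htoReal z₀ hz₀).comp hφmono.tendsto_atTop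
      · exact tendsto_one_div_add_atTop_nhds_zero_nat.comp hφmono.tendsto_atTop
    rw [add_zero] at h1
    exact le_of_tendsto_of_tendsto' (hh z₀ hz₀) h1 fun n => (hnlt (φ n)).le
  -- harmonicity of the limit
  have hharm' : HarmonicOnSet h D := by
    intro z hz
    obtain ⟨R, hR0, hsubR, F, hFd, hFre, hFim, L, hL0, hLip⟩ :=
      local_package hD hnharm hnpos hbnd hz
    have hbD : ball z R ⊆ D := fun w hw =>
      hsubR (mem_closedBall.2 (by have := mem_ball.1 hw; linarith))
    -- uniform Cauchy of h-sequence on closedBall z (R/8)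
    have hUC : ∀ ε > 0, ∃ N, ∀ m ≥ N, ∀ n ≥ N, ∀ x ∈ closedBall z (R/8),
        |hn (φ m) x - hn (φ n) x| ≤ ε := by
      intro ε hε
      set δ : ℝ := min (R/16) (ε/(5*(L+1))) with hδdef
      have hδ0 : 0 < δ := lt_min (by positivity) (by positivity)
      set U : ℕ → Set ℂ := fun k => ball (e k) δ ∩ ball z (R/4) with hU
      have hUo : ∀ k, IsOpen (U k) := fun k => isOpen_ball.inter isOpen_ball
      have hcov : closedBall z (R/8) ⊆ ⋃ k, U k := by
        intro x hx
        rw [mem_closedBall] at hx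
        obtain ⟨t, htball, htT⟩ := hTd.inter_open_nonempty (ball x δ) isOpen_ball
          (nonempty_ball.2 hδ0)
        have htx : dist t x < δ := mem_ball.1 htball
        have hd16 : δ ≤ R/16 := min_le_left _ _
        have htz : dist t z < R/4 := by
          calc dist t z ≤ dist t x + dist x z := dist_triangle _ _ _
            _ < δ + R/8 := by linarith
            _ ≤ R/4 := by linarith
        have htD : t ∈ D := hsubR (mem_closedBall.2 (by linarith))
        obtain ⟨k, hk⟩ : ∃ k, e k = t := by
          have : t ∈ T ∩ D := ⟨htT, htD⟩
          rw [he] at this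
          exact this
        refine mem_iUnion.2 ⟨k, ?_, ?_⟩
        · rw [hk, mem_ball, dist_comm]; exact htx
        · rw [mem_ball]
          calc dist x z ≤ R/8 := hx
            _ < R/4 := by linarith
      obtain ⟨s, hscov⟩ := (isCompact_closedBall z (R/8)).elim_finite_subcover U hUo hcov
      have hNk : ∀ k : ℕ, ∃ Nk, ∀ m ≥ Nk, ∀ n ≥ Nk,
          |hn (φ m) (e k) - hn (φ n) (e k)| < ε/5 := by
        intro k
        have hck := (hconvk k).cauchySeq
        rw [Metric.cauchySeq_iff] at hck
        obtain ⟨N, hN⟩ := hck (ε/5) (by positivity)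
        exact ⟨N, fun m hm n hn' => by
          have := hN m hm n hn'
          rwa [Real.dist_eq] at this⟩
      choose Nk hNkspec using hNk
      refine ⟨s.sup Nk, fun m hm n hn' x hx => ?_⟩
      obtain ⟨k, hks, hkx⟩ : ∃ k ∈ s, x ∈ U k := by
        have := hscov hx
        simpa using this
      have hNle : Nk k ≤ s.sup Nk := Finset.le_sup hks
      have hxek : dist x (e k) < δ := mem_ball.1 hkx.1
      have hd16 : δ ≤ R/16 := min_le_left _ _
      have hekz : e k ∈ ball z (R/4) := by
        rw [mem_ball]
        have hxz : dist x z ≤ R/8 := mem_closedBall.1 hx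
        calc dist (e k) z ≤ dist (e k) x + dist x z := dist_triangle _ _ _
          _ < δ + R/8 := by
              rw [dist_comm]
              exact add_lt_add_of_lt_of_le hxek hxz
          _ ≤ R/4 := by linarith
      have hxball : x ∈ ball z (R/4) := hkx.2
      have hLipk : ∀ l, |hn l x - hn l (e k)| ≤ L * dist x (e k) := fun l =>
        hLip l x hxball (e k) hekz
      have hLδ : L * dist x (e k) ≤ ε/5 := by
        have h1 : dist x (e k) ≤ ε/(5*(L+1)) := le_trans hxek.le (min_le_right _ _)
        calc L * dist x (e k) ≤ L * (ε/(5*(L+1))) := mul_le_mul_of_nonneg_left h1 hL0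
          _ ≤ ε/5 := by
              rw [← mul_div_assoc, div_le_div_iff₀ (by positivity) (by norm_num)]
              nlinarith
      have hcd := hNkspec k m (le_trans hNle hm) n (le_trans hNle hn')
      have tri : |hn (φ m) x - hn (φ n) x| ≤ |hn (φ m) x - hn (φ m) (e k)|
          + |hn (φ m) (e k) - hn (φ n) (e k)| + |hn (φ n) (e k) - hn (φ n) x| := by
        have t1 := abs_sub_le (hn (φ m) x) (hn (φ m) (e k)) (hn (φ n) x)
        have t2 := abs_sub_le (hn (φ m) (e k)) (hn (φ n) (e k)) (hn (φ n) x)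
        linarith
      have h1 := hLipk (φ m)
      have h2 := hLipk (φ n)
      have h3 : |hn (φ n) (e k) - hn (φ n) x| = |hn (φ n) x - hn (φ n) (e k)| :=
        abs_sub_comm _ _
      rw [h3] at tri
      linarith
    -- uniform Cauchy of the holomorphic representatives on ball z (R/16)
    have hFC : ∀ ε > 0, ∃ N, ∀ m ≥ N, ∀ n ≥ N, ∀ x ∈ ball z (R/16),
        norm (F (φ m) x - F (φ n) x) ≤ 5*ε := by
      intro ε hε
      obtain ⟨N, hN⟩ := hUC ε hε
      refine ⟨N, fun m hm n hn' x hx => ?_⟩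
      set G : ℂ → ℂ := fun y => F (φ m) y - F (φ n) y with hG
      have hGd : DifferentiableOn ℂ G (ball z (R/8)) :=
        (((hFd (φ m)).mono (ball_subset_ball (by linarith))).sub
          ((hFd (φ n)).mono (ball_subset_ball (by linarith))))
      have hGre : ∀ y ∈ ball z (R/8), |(G y).re| ≤ ε := by
        intro y hy
        have hy' : y ∈ ball z R := ball_subset_ball (by linarith) hy
        have e1 : (G y).re = hn (φ m) y - hn (φ n) y := by
          rw [hG]
          simp only [Complex.sub_re]
          rw [← hFre (φ m) y hy', ← hFre (φ n) y hy']
        rw [e1]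
        exact hN m hm n hn' y (ball_subset_closedBall hy)
      have hGz : norm (G z) ≤ ε := by
        have him : (G z).im = 0 := by
          rw [hG]; simp only [Complex.sub_im, hFim (φ m), hFim (φ n), sub_zero]
        have habsre : norm (G z) = |(G z).re| := by
          rw [Complex.norm_def, Complex.normSq_apply, him, mul_zero, add_zero,
            ← Real.sqrt_sq_eq_abs]
          ring_nf
        rw [habsre]
        exact hGre z (mem_ball_self (by positivity))
      have hxz : dist x z ≤ (R/8)/2 := by
        have := mem_ball.1 hx
        linarith
      have hx8 : x ∈ ball z (R/8) := mem_ball.2 (by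
        have := mem_ball.1 hx; linarith)
      have hbc := bc_pt hGd hGre hx8 hxz
      calc norm (G x) ≤ 3 * norm (G z) + 2 * ε := hbc
        _ ≤ 5*ε := by linarith
    -- pointwise limit of the representatives
    have hFcauchy : ∀ x ∈ ball z (R/16), CauchySeq (fun n => F (φ n) x) := by
      intro x hx
      rw [Metric.cauchySeq_iff]
      intro ε hε
      obtain ⟨N, hN⟩ := hFC (ε/10) (by positivity)
      refine ⟨N, fun m hm n hn' => ?_⟩
      have := hN m hm n hn' x hx
      rw [dist_eq_norm]
      calc norm (F (φ m) x - F (φ n) x) ≤ 5*(ε/10) := this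
        _ < ε := by linarith
    have hFlim : ∀ x, x ∈ ball z (R/16) → ∃ l, Tendsto (fun n => F (φ n) x) atTop (𝓝 l) :=
      fun x hx => cauchySeq_tendsto_of_complete (hFcauchy x hx)
    choose! Flim hFlimspec using hFlim
    -- uniform convergence
    have hUCF : UniformCauchySeqOn (fun n => F (φ n)) atTop (ball z (R/16)) := by
      rw [Metric.uniformCauchySeqOn_iff]
      intro ε hε
      obtain ⟨N, hN⟩ := hFC (ε/10) (by positivity)
      refine ⟨N, fun m hm n hn' x hx => ?_⟩
      rw [dist_eq_norm]
      calc norm (F (φ m) x - F (φ n) x) ≤ 5*(ε/10) := hN m hm n hn' x hx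
        _ < ε := by linarith
    have hTU : TendstoUniformlyOn (fun n => F (φ n)) Flim atTop (ball z (R/16)) :=
      hUCF.tendstoUniformlyOn_of_tendsto hFlimspec
    have hFlimDiff : DifferentiableOn ℂ Flim (ball z (R/16)) := by
      apply hTU.tendstoLocallyUniformlyOn.differentiableOn
      · exact Eventually.of_forall fun n =>
          (hFd (φ n)).mono (ball_subset_ball (by linarith))
      · exact isOpen_ball
    refine ⟨R/16, by positivity, fun w hw => hbD (ball_subset_ball (by linarith) hw),
      Flim, hFlimDiff, fun w hw => ?_⟩
    have hwD : w ∈ D := hbD (ball_subset_ball (by linarith) hw)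
    have h1 : Tendsto (fun n => (F (φ n) w).re) atTop (𝓝 ((Flim w).re)) :=
      (Complex.continuous_re.tendsto _).comp (hTU.tendsto_at hw)
    have h2 : Tendsto (fun n => (F (φ n) w).re) atTop (𝓝 (h w)) := by
      have h3 : (fun n => (F (φ n) w).re) = fun n => hn (φ n) w := by
        funext n
        exact (hFre (φ n) w (ball_subset_ball (by linarith) hw)).symm
      rw [h3]
      exact hh w hwD
    exact tendsto_nhds_unique h2 h1
  exact ⟨h, hharm', hpos', hmaj', hval⟩

theorem infHarmonic_pointwise_limit (D : Set ℂ) (hD : IsOpen D) (hDc : IsConnected D)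
    (uN : ℕ → ℂ → ℝ) (hu : ∀ n, InfHarmonicOn (uN n) D)
    (u : ℂ → ℝ≥0∞)
    (hconv : ∀ z ∈ D,
      Filter.Tendsto (fun n => ENNReal.ofReal (uN n z)) Filter.atTop (nhds (u z))) :
    (∀ z ∈ D, u z = ⊤) ∨
    ((∀ z ∈ D, u z ≠ ⊤) ∧ InfHarmonicOn (fun z => (u z).toReal) D) := by
  classical
  -- Harnack inequality for the functions `uN n`
  have harnackU : ∀ n : ℕ, ∀ c ∈ D, ∀ R : ℝ, 0 < R → closedBall c (2*R) ⊆ D →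
      ∀ z : ℂ, dist z c ≤ R/2 → uN n z ≤ 3 * uN n c ∧ uN n c ≤ 3 * uN n z := by
    intro n c hc R hR hsub z hz
    obtain ⟨H, hne, hharm, hpos, hinf⟩ := hu n
    have hzD : z ∈ D := hsub (mem_closedBall.2 (by linarith))
    have hbbz : BddBelow ((fun h => h z) '' H) :=
      ⟨0, by rintro x ⟨g, hg, rfl⟩; exact hpos g hg z hzD⟩
    have hbbc : BddBelow ((fun h => h c) '' H) :=
      ⟨0, by rintro x ⟨g, hg, rfl⟩; exact hpos g hg c hc⟩
    constructor
    · have hstep : ∀ x ∈ (fun h => h c) '' H, uN n z / 3 ≤ x := by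
        rintro x ⟨g, hg, rfl⟩
        have hhar := (harnack_harmonic hD (hharm g hg) (hpos g hg) hR hsub hz).1
        have hle : uN n z ≤ g z := by
          rw [hinf z hzD]
          exact csInf_le hbbz (mem_image_of_mem _ hg)
        simp only
        linarith
      have h2 := le_csInf (hne.image _) hstep
      rw [← hinf c hc] at h2
      linarith
    · have hstep : ∀ x ∈ (fun h => h z) '' H, uN n c / 3 ≤ x := by
        rintro x ⟨g, hg, rfl⟩
        have hhar := (harnack_harmonic hD (hharm g hg) (hpos g hg) hR hsub hz).2
        have hle : uN n c ≤ g c := by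
          rw [hinf c hc]
          exact csInf_le hbbc (mem_image_of_mem _ hg)
        simp only
        linarith
      have h2 := le_csInf (hne.image _) hstep
      rw [← hinf z hzD] at h2
      linarith
  -- comparison of limits
  have hle3 : ∀ a b : ℂ, a ∈ D → b ∈ D → (∀ n, uN n a ≤ 3 * uN n b) →
      u a ≤ 3 * u b := by
    intro a b ha hb hab
    have t1 := hconv a ha
    have t2 : Tendsto (fun n => (3:ℝ≥0∞) * ENNReal.ofReal (uN n b)) atTop
        (𝓝 (3 * u b)) :=
      ENNReal.Tendsto.const_mul (hconv b hb) (Or.inr (by simp))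
    apply le_of_tendsto_of_tendsto' t1 t2
    intro n
    calc ENNReal.ofReal (uN n a) ≤ ENNReal.ofReal (3 * uN n b) :=
          ENNReal.ofReal_le_ofReal (hab n)
      _ = ENNReal.ofReal 3 * ENNReal.ofReal (uN n b) := ENNReal.ofReal_mul (by norm_num)
      _ = 3 * ENNReal.ofReal (uN n b) := by norm_num
  -- local stability of `u = ⊤`
  have hloc : ∀ x ∈ D, ∃ δ > 0, ∀ w ∈ ball x δ ∩ D, ((u x = ⊤) ↔ (u w = ⊤)) := by
    intro x hx
    obtain ⟨ε, hε0, hεD⟩ := Metric.isOpen_iff.1 hD x hx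
    set R : ℝ := ε / 3 with hRdef
    have hR0 : 0 < R := by positivity
    have hsub : closedBall x (2*R) ⊆ D := fun w hw => by
      apply hεD
      rw [mem_ball]; rw [mem_closedBall] at hw
      calc dist w x ≤ 2*R := hw
        _ < ε := by rw [hRdef]; linarith
    refine ⟨R/2, by positivity, fun w hw => ?_⟩
    have hwD : w ∈ D := hw.2
    have hd : dist w x ≤ R/2 := (mem_ball.1 hw.1).le
    have h1 : u w ≤ 3 * u x :=
      hle3 w x hwD hx (fun n => (harnackU n x hx R hR0 hsub w hd).1)
    have h2 : u x ≤ 3 * u w :=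
      hle3 x w hx hwD (fun n => (harnackU n x hx R hR0 hsub w hd).2)
    constructor
    · intro htop
      by_contra hne
      have hfin3 : 3 * u w ≠ ⊤ := ENNReal.mul_ne_top (by simp) hne
      rw [htop] at h2
      exact hfin3 (top_le_iff.1 h2)
    · intro htop
      by_contra hne
      have hfin3 : 3 * u x ≠ ⊤ := ENNReal.mul_ne_top (by simp) hne
      rw [htop] at h1
      exact hfin3 (top_le_iff.1 h1)
  by_cases hex : ∃ z₀ ∈ D, u z₀ = ⊤
  · left
    obtain ⟨z₀, hz₀, htop⟩ := hex
    intro z hz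
    exact propagate hDc.isPreconnected hloc hz₀ htop hz
  · right
    push_neg at hex
    refine ⟨hex, ?_⟩
    set HH : Set (ℂ → ℝ) := {g | HarmonicOnSet g D ∧ (∀ z ∈ D, 0 ≤ g z) ∧
      ∀ z ∈ D, (u z).toReal ≤ g z} with hHH
    obtain ⟨zb, hzb⟩ := hDc.nonempty
    obtain ⟨g₀, hg₀⟩ := exists_minimal_majorant hD hDc hu hconv hex hzb
    refine ⟨HH, ⟨g₀, hg₀.1, hg₀.2.1, hg₀.2.2.1⟩, fun g hg => hg.1, fun g hg => hg.2.1, ?_⟩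
    intro z hz
    obtain ⟨g, hgH, hgpos, hgmaj, hgval⟩ := exists_minimal_majorant hD hDc hu hconv hex hz
    have hgHH : g ∈ HH := ⟨hgH, hgpos, hgmaj⟩
    show (u z).toReal = sInf ((fun h => h z) '' HH)
    apply le_antisymm
    · refine le_csInf ⟨g z, ⟨g, hgHH, rfl⟩⟩ ?_
      rintro x ⟨f, hf, rfl⟩
      exact hf.2.2 z hz
    · have hbb : BddBelow ((fun h => h z) '' HH) :=
        ⟨0, by rintro x ⟨f, hf, rfl⟩; exact hf.2.1 z hz⟩
      calc sInf ((fun h => h z) '' HH) ≤ g z := csInf_le hbb ⟨g, hgHH, rfl⟩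
        _ = (u z).toReal := hgval
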